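/- With p and Y as in the context, the expectation of Y under p equals minus the squared distance between the two unit vectors: ∑_{s ∈ ι} p(s) · Y(s) = −‖φ₁ − φ₀‖². -/

import Mathlib

/-- With `p s = |⟨e_s, φ₀⟩|²` and
`Y s = 2·Re[(⟨e_s, φ₁⟩ − ⟨e_s, φ₀⟩)/⟨e_s, φ₀⟩]` (where `⟨e_s, φ⟩ = φ s` is the
coefficient of `φ` in the standard orthonormal basis of `ℂ^ι`), the expectation
of `Y` under `p` equals `−‖φ₁ − φ₀‖²`. -/
theorem stmt3 {ι : Type*} [Fintype ι] [Nonempty ι]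
    (φ₀ φ₁ : EuclideanSpace ℂ ι) (h₀ : ‖φ₀‖ = 1) (h₁ : ‖φ₁‖ = 1)
    (hne : ∀ s, φ₀ s ≠ 0)
    (p Y : ι → ℝ)
    (hp : ∀ s, p s = ‖φ₀ s‖ ^ 2)
    (hY : ∀ s, Y s = 2 * ((φ₁ s - φ₀ s) / φ₀ s).re) :
    ∑ s, p s * Y s = -‖φ₁ - φ₀‖ ^ 2 := by
  have hpt : ∀ s, p s * Y s
      = 2 * ((starRingEnd ℂ) (φ₀ s) * φ₁ s).re - 2 * ‖φ₀ s‖ ^ 2 := by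
    intro s
    rw [hp, hY]
    set z := φ₀ s with hz
    set w := φ₁ s with hw
    have hz0 : z ≠ 0 := hne s
    have hnorm : (‖z‖ ^ 2 : ℝ) = Complex.normSq z := by
      rw [Complex.sq_norm]
    have hmul : ((Complex.normSq z : ℂ)) * ((w - z) / z)
        = (starRingEnd ℂ) z * (w - z) := by
      rw [← Complex.mul_conj]
      field_simp
    calc ‖z‖ ^ 2 * (2 * ((w - z) / z).re)
        = 2 * ((Complex.normSq z : ℝ) * ((w - z) / z).re) := by
          rw [hnorm]; ring
      _ = 2 * (((Complex.normSq z : ℂ)) * ((w - z) / z)).re := by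
          rw [Complex.re_ofReal_mul]
      _ = 2 * ((starRingEnd ℂ) z * (w - z)).re := by rw [hmul]
      _ = 2 * ((starRingEnd ℂ) z * w).re - 2 * ‖z‖ ^ 2 := by
          rw [mul_sub, Complex.sub_re, hnorm, ← Complex.normSq_eq_conj_mul_self]
          simp [Complex.ofReal_re]
          ring
  have hsum0 : ∑ s, ‖φ₀ s‖ ^ 2 = 1 := by
    have := EuclideanSpace.norm_eq φ₀
    rw [h₀] at this
    have h' : ∑ s, ‖φ₀ s‖ ^ 2 = 1 ^ 2 := by
      rw [one_pow, ← Real.sq_sqrt (Finset.sum_nonneg fun s _ => sq_nonneg _), ← this]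
      norm_num
    simpa using h'
  have hinner : (inner ℂ φ₀ φ₁ : ℂ) = ∑ s, (starRingEnd ℂ) (φ₀ s) * φ₁ s := by
    simp [PiLp.inner_apply, RCLike.inner_apply, mul_comm]
  have hL : ∑ s, p s * Y s = 2 * (inner ℂ φ₀ φ₁ : ℂ).re - 2 := by
    calc ∑ s, p s * Y s
        = ∑ s, (2 * ((starRingEnd ℂ) (φ₀ s) * φ₁ s).re - 2 * ‖φ₀ s‖ ^ 2) := by
          exact Finset.sum_congr rfl fun s _ => hpt s
      _ = 2 * ∑ s, ((starRingEnd ℂ) (φ₀ s) * φ₁ s).re - 2 * ∑ s, ‖φ₀ s‖ ^ 2 := by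
          rw [Finset.sum_sub_distrib, Finset.mul_sum, Finset.mul_sum]
      _ = 2 * (inner ℂ φ₀ φ₁ : ℂ).re - 2 := by
          rw [hinner, Complex.re_sum, hsum0, mul_one]
  have hR : ‖φ₁ - φ₀‖ ^ 2 = 2 - 2 * (inner ℂ φ₀ φ₁ : ℂ).re := by
    rw [@norm_sub_sq ℂ, h₀, h₁]
    have : RCLike.re (inner ℂ φ₁ φ₀ : ℂ) = (inner ℂ φ₀ φ₁ : ℂ).re := by
      rw [← inner_conj_symm φ₀ φ₁]; exact (RCLike.conj_re _).symm
    rw [this]; ring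
  rw [hL, hR]; ring
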